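/- For a càdlàg cocycle on a compact metric space, for every fixed t and ω, the family of maps {φ(s,ω) : 0 ≤ s ≤ t} is equicontinuous. -/

import Mathlib

open Filter Topology NNReal

/-- From a sequence converging to `s` from strictly above, one can extract a strictly
decreasing subsequence. -/
lemma aux_anti {v : ℕ → ℝ≥0} {s : ℝ≥0} (hgt : ∀ n, s < v n)
    (hv : Tendsto v atTop (𝓝 s)) :
    ∃ h : ℕ → ℕ, StrictMono h ∧ StrictAnti (v ∘ h) := by
  have key : ∀ n : ℕ, ∃ m, n < m ∧ v m < v n := by
    intro n
    have h1 : ∀ᶠ m in atTop, v m < v n := hv.eventually_lt_const (hgt n)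
    exact ((eventually_gt_atTop n).and h1).exists
  let h : ℕ → ℕ := fun k => Nat.rec 0 (fun _ p => (key p).choose) k
  have hsucc : ∀ k, h k < h (k + 1) ∧ v (h (k + 1)) < v (h k) := fun k => (key (h k)).choose_spec
  exact ⟨h, strictMono_nat_of_lt_succ fun k => (hsucc k).1,
    strictAnti_nat_of_succ_lt fun k => (hsucc k).2⟩

/-- From a sequence converging to `s` from strictly below, one can extract a strictly
increasing subsequence. -/
lemma aux_mono {v : ℕ → ℝ≥0} {s : ℝ≥0} (hlt : ∀ n, v n < s)
    (hv : Tendsto v atTop (𝓝 s)) :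
    ∃ h : ℕ → ℕ, StrictMono h ∧ StrictMono (v ∘ h) := by
  have key : ∀ n : ℕ, ∃ m, n < m ∧ v n < v m := by
    intro n
    have h1 : ∀ᶠ m in atTop, v n < v m := hv.eventually_const_lt (hlt n)
    exact ((eventually_gt_atTop n).and h1).exists
  let h : ℕ → ℕ := fun k => Nat.rec 0 (fun _ p => (key p).choose) k
  have hsucc : ∀ k, h k < h (k + 1) ∧ v (h k) < v (h (k + 1)) := fun k => (key (h k)).choose_spec
  exact ⟨h, strictMono_nat_of_lt_succ fun k => (hsucc k).1,
    strictMono_nat_of_lt_succ fun k => (hsucc k).2⟩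

/-- Any convergent sequence in `ℝ≥0` has a subsequence which is either antitone or
strictly monotone. -/
lemma aux_mono_or_anti (u : ℕ → ℝ≥0) (s : ℝ≥0) (hu : Tendsto u atTop (𝓝 s)) :
    ∃ g : ℕ → ℕ, StrictMono g ∧ (Antitone (u ∘ g) ∨ StrictMono (u ∘ g)) := by
  by_cases h1 : ∃ᶠ n in atTop, u n = s
  · obtain ⟨g, hg, hgs⟩ := Filter.extraction_of_frequently_atTop h1
    exact ⟨g, hg, Or.inl fun a b _ => by simp [Function.comp, hgs a, hgs b]⟩
  by_cases h2 : ∃ᶠ n in atTop, s < u n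
  · obtain ⟨g0, hg0, hgs⟩ := Filter.extraction_of_frequently_atTop h2
    have hv : Tendsto (u ∘ g0) atTop (𝓝 s) := hu.comp hg0.tendsto_atTop
    obtain ⟨h, hh, hanti⟩ := aux_anti hgs hv
    exact ⟨g0 ∘ h, hg0.comp hh, Or.inl hanti.antitone⟩
  · have h3 : ∃ᶠ n in atTop, u n < s := by
      have hA : ∀ᶠ n in atTop, ¬ u n = s := not_frequently.mp h1
      have hB : ∀ᶠ n in atTop, ¬ s < u n := not_frequently.mp h2
      exact ((hA.and hB).mono fun n hn => lt_of_le_of_ne (not_lt.mp hn.2) hn.1).frequently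
    obtain ⟨g0, hg0, hgs⟩ := Filter.extraction_of_frequently_atTop h3
    have hv : Tendsto (u ∘ g0) atTop (𝓝 s) := hu.comp hg0.tendsto_atTop
    obtain ⟨h, hh, hmono⟩ := aux_mono hgs hv
    exact ⟨g0 ∘ h, hg0.comp hh, Or.inr hmono⟩

/-- Lemma A1: for a càdlàg cocycle (here, for one fixed noise realisation, a family
`φ s : X → X`, `s ∈ [0,∞)`, of continuous maps on a compact metric space which is
right-continuous with left limits jointly in time and space), for every `t` the family
`{φ s : 0 ≤ s ≤ t}` is equicontinuous. -/
theorem stmt17 {X : Type*} [MetricSpace X] [CompactSpace X]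
    (φ : ℝ≥0 → X → X) (hcont : ∀ s, Continuous (φ s))
    (hright : ∀ (u : ℕ → ℝ≥0) (t : ℝ≥0) (x : ℕ → X) (p : X),
      Antitone u → Tendsto u atTop (𝓝 t) → Tendsto x atTop (𝓝 p) →
        Tendsto (fun n => φ (u n) (x n)) atTop (𝓝 (φ t p)))
    (φm : ℝ≥0 → X → X)
    (hleft : ∀ (u : ℕ → ℝ≥0) (t : ℝ≥0) (x : ℕ → X) (p : X),
      StrictMono u → Tendsto u atTop (𝓝 t) → Tendsto x atTop (𝓝 p) →
        Tendsto (fun n => φ (u n) (x n)) atTop (𝓝 (φm t p)))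
    (t : ℝ≥0) :
    Equicontinuous (fun s : {s : ℝ≥0 // s ≤ t} => φ s) := by
  by_contra hne
  rw [Equicontinuous] at hne
  push_neg at hne
  obtain ⟨x₀, hx₀⟩ := hne
  rw [Metric.equicontinuousAt_iff] at hx₀
  push_neg at hx₀
  obtain ⟨ε, εpos, hε⟩ := hx₀
  -- pick sequences
  have hsel : ∀ n : ℕ, ∃ (y : X) (i : {s : ℝ≥0 // s ≤ t}),
      dist y x₀ < 1 / (n + 1) ∧ ε ≤ dist (φ i x₀) (φ i y) := by
    intro n
    obtain ⟨y, hy, i, hi⟩ := hε (1 / (n + 1)) (by positivity)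
    exact ⟨y, i, hy, hi⟩
  choose y i hy hi using hsel
  have hytend : Tendsto y atTop (𝓝 x₀) := by
    rw [tendsto_iff_dist_tendsto_zero]
    exact squeeze_zero (fun n => dist_nonneg) (fun n => (hy n).le)
      tendsto_one_div_add_atTop_nhds_zero_nat
  set u : ℕ → ℝ≥0 := fun n => (i n : ℝ≥0) with hu_def
  have humem : ∀ n, u n ∈ Set.Icc (0 : ℝ≥0) t := fun n => ⟨zero_le, (i n).2⟩
  obtain ⟨s₀, -, g1, hg1, hg1t⟩ := (isCompact_Icc (a := (0:ℝ≥0)) (b := t)).tendsto_subseq humem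
  obtain ⟨g2, hg2, hcase⟩ := aux_mono_or_anti (u ∘ g1) s₀ hg1t
  set g : ℕ → ℕ := g1 ∘ g2 with hg_def
  have hgmono : StrictMono g := hg1.comp hg2
  have hut : Tendsto (u ∘ g) atTop (𝓝 s₀) := hg1t.comp hg2.tendsto_atTop
  have hyt : Tendsto (fun n => y (g n)) atTop (𝓝 x₀) := hytend.comp hgmono.tendsto_atTop
  have hdist : ∀ (L : X),
      Tendsto (fun n => φ (u (g n)) x₀) atTop (𝓝 L) →
      Tendsto (fun n => φ (u (g n)) (y (g n))) atTop (𝓝 L) → False := by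
    intro L hA hB
    have hd : Tendsto (fun n => dist (φ (u (g n)) x₀) (φ (u (g n)) (y (g n)))) atTop
        (𝓝 (dist L L)) := hA.dist hB
    rw [dist_self] at hd
    have hge : ε ≤ (0 : ℝ) :=
      ge_of_tendsto hd (Eventually.of_forall fun n => hi (g n))
    linarith
  rcases hcase with hanti | hmono
  · exact hdist (φ s₀ x₀)
      (hright (u ∘ g) s₀ (fun _ => x₀) x₀ hanti hut tendsto_const_nhds)
      (hright (u ∘ g) s₀ (fun n => y (g n)) x₀ hanti hut hyt)
  · exact hdist (φm s₀ x₀)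
      (hleft (u ∘ g) s₀ (fun _ => x₀) x₀ hmono hut tendsto_const_nhds)
      (hleft (u ∘ g) s₀ (fun n => y (g n)) x₀ hmono hut hyt)
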